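/- If G is a finite perfect group and G* is a Schur cover of G (so there is an exact sequence 1 → A → G* → G → 1 with A ≅ M(G) contained in Z(G*) ∩ (G*)'), then d^⊗(G) = d(G*). -/

import Mathlib

open scoped commutatorElement

/-- Counting lemma: for a surjective hom `f : H →* Q`, the preimage of a set `S ⊆ Q`
has cardinality `|S| * |ker f|`. -/
lemma aux_card_preimage {H Q : Type*} [Group H] [Group Q]
    (f : H →* Q) (hf : Function.Surjective f) (S : Set Q) :
    Nat.card {h : H // f h ∈ S} = Nat.card S * Nat.card f.ker := by
  classical
  choose σ hσ using hf
  have e : {h : H // f h ∈ S} ≃ S × f.ker :=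
    { toFun := fun h => (⟨f h.1, h.2⟩, ⟨h.1 * (σ (f h.1))⁻¹, by
        simp [MonoidHom.mem_ker, hσ]⟩)
      invFun := fun p => ⟨p.2.1 * σ p.1.1, by
        have hk : f p.2.1 = 1 := p.2.2
        simp [hk, hσ, p.1.2]⟩
      left_inv := fun h => by simp
      right_inv := fun p => by
        have hk : f p.2.1 = 1 := p.2.2
        ext <;> simp [hk, hσ] }
  rw [Nat.card_congr e, Nat.card_prod]

theorem tensor_degree_perfect_eq_commutativity_degree_schur_cover
    {G Gstar T : Type*} [Group G] [Fintype G] [Group Gstar] [Fintype Gstar] [Group T]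
    (hperfect : commutator G = ⊤)
    (π : Gstar →* G) (hπ : Function.Surjective π)
    (hstem : π.ker ≤ Subgroup.center Gstar ⊓ commutator Gstar)
    (t : G → G → T)
    (ξ : T ≃* Gstar)
    (hξ : ∀ g h : G, ∀ g₁ h₁ : Gstar, π g₁ = g → π h₁ = h → ξ (t g h) = ⁅g₁, h₁⁆) :
    (Nat.card {q : G × G // t q.1 q.2 = 1} : ℝ) / (Fintype.card G : ℝ) ^ 2 =
      (Nat.card {q : Gstar × Gstar // Commute q.1 q.2} : ℝ) /
        (Fintype.card Gstar : ℝ) ^ 2 := by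
  classical
  set K := Nat.card π.ker with hK
  -- commuting in Gstar iff tensor of images is trivial
  have key : ∀ q : Gstar × Gstar, Commute q.1 q.2 ↔ t (π q.1) (π q.2) = 1 := by
    intro q
    rw [← commutatorElement_eq_one_iff_commute]
    have h1 : ξ (t (π q.1) (π q.2)) = ⁅q.1, q.2⁆ := hξ _ _ _ _ rfl rfl
    constructor
    · intro hc
      apply ξ.injective
      rw [h1, hc, map_one]
    · intro ht
      rw [← h1, ht, map_one]
  -- the product map
  let Φ : Gstar × Gstar →* G × G := π.prodMap π
  have hΦ : Function.Surjective Φ := Function.Surjective.prodMap hπ hπ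
  have hkerΦ : Nat.card Φ.ker = K * K := by
    have e : Φ.ker ≃ π.ker × π.ker :=
      { toFun := fun x => (⟨x.1.1, congrArg Prod.fst x.2⟩, ⟨x.1.2, congrArg Prod.snd x.2⟩)
        invFun := fun p => ⟨(p.1.1, p.2.1), by
          have h1 : π p.1.1 = 1 := p.1.2
          have h2 : π p.2.1 = 1 := p.2.2
          simp [Φ, MonoidHom.mem_ker, Prod.ext_iff, h1, h2]⟩
        left_inv := fun x => rfl
        right_inv := fun p => rfl }
    rw [Nat.card_congr e, Nat.card_prod]
  -- counting commuting pairs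
  have hcount : Nat.card {q : Gstar × Gstar // Commute q.1 q.2} =
      Nat.card {q : G × G // t q.1 q.2 = 1} * (K * K) := by
    have e : {q : Gstar × Gstar // Commute q.1 q.2} ≃
        {h : Gstar × Gstar // Φ h ∈ {p : G × G | t p.1 p.2 = 1}} :=
      Equiv.subtypeEquivRight (fun q => by simpa [Φ] using key q)
    rw [Nat.card_congr e, aux_card_preimage Φ hΦ, hkerΦ]
    rfl
  -- counting Gstar
  have hGstar : Fintype.card Gstar = Fintype.card G * K := by
    have h := aux_card_preimage π hπ Set.univ
    rw [Nat.card_congr (Equiv.subtypeUnivEquiv (fun x => Set.mem_univ (π x))),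
      Nat.card_congr (Equiv.Set.univ G)] at h
    rw [hK]
    simpa [Nat.card_eq_fintype_card] using h
  have hKpos : (0 : ℝ) < K := by
    have : Nat.card π.ker ≠ 0 := Nat.card_pos.ne'
    positivity
  have hGpos : (0 : ℝ) < Fintype.card G := by positivity
  rw [hcount, hGstar]
  push_cast
  field_simp
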